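/- Let A, B ⊆ ℝⁿ be arbitrary subsets and X₁,…,X_r : ℝⁿ → ℝⁿ arbitrary vector fields. If A ⊆ char(B) and A is open in B (in the subspace topology), then A = char(A). -/

import Mathlib

/-- A vector `v` is C¹-Zariski tangent to a set `A ⊆ ℝⁿ` at `p` if every C¹ function
vanishing identically on `A` has derivative zero along `v` at `p`. -/
def ZariskiTangent {n : ℕ} (A : Set (Fin n → ℝ)) (p v : Fin n → ℝ) : Prop :=
  ∀ f : (Fin n → ℝ) → ℝ, ContDiff ℝ 1 f → (∀ x ∈ A, f x = 0) → fderiv ℝ f p v = 0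

/-- The set of characteristic points of `A` with respect to the vector fields `X j`. -/
def charSet {n r : ℕ} (X : Fin r → (Fin n → ℝ) → (Fin n → ℝ)) (A : Set (Fin n → ℝ)) :
    Set (Fin n → ℝ) :=
  {p ∈ A | ∀ j, ZariskiTangent A p (X j p)}

/-- if `A ⊆ char(B)` and `A` is open in `B` (subspace topology),
then `A = char(A)`.  No regularity of the vector fields is assumed. -/
theorem char_of_open_subset_char {n r : ℕ} (X : Fin r → (Fin n → ℝ) → (Fin n → ℝ))
    (A B : Set (Fin n → ℝ)) (hAB : A ⊆ charSet X B)
    (hopen : ∃ U : Set (Fin n → ℝ), IsOpen U ∧ A = B ∩ U) :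
    A = charSet X A := by
  apply Set.Subset.antisymm
  · intro p hp
    obtain ⟨U, hU, hAU⟩ := hopen
    have hpU : p ∈ U := (hAU ▸ hp).2
    have hpB : p ∈ B := (hAU ▸ hp).1
    obtain ⟨ε, hε, hball⟩ := Metric.isOpen_iff.1 hU p hpU
    -- bump function
    set c : ContDiffBump p := ⟨ε / 2, ε, by positivity, by linarith⟩ with hc
    refine ⟨hp, fun j f hf hf0 => ?_⟩
    have hchar := (hAB hp).2 j
    have hfg : ∀ x ∈ B, f x * c x = 0 := by
      intro x hx
      by_cases hxc : c x = 0
      · rw [hxc, mul_zero]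
      · have hxU : x ∈ U := hball (by rwa [← c.support_eq, Function.mem_support])
        have : x ∈ A := hAU ▸ ⟨hx, hxU⟩
        rw [hf0 x this, zero_mul]
    have hg : ContDiff ℝ 1 (fun x => c x) := c.contDiff
    have key := hchar (fun x => f x * c x) (hf.mul hg) hfg
    have hdf : DifferentiableAt ℝ f p := hf.differentiable one_ne_zero |>.differentiableAt
    have hdg : DifferentiableAt ℝ (fun x => c x) p :=
      hg.differentiable one_ne_zero |>.differentiableAt
    rw [fderiv_fun_mul hdf hdg] at key
    simp only [ContinuousLinearMap.add_apply, ContinuousLinearMap.smul_apply] at key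
    rw [hf0 p hp, c.one_of_mem_closedBall (Metric.mem_closedBall_self (by positivity))] at key
    simpa using key
  · intro p hp
    exact hp.1
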